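/- For the cycle $C_n$ on $n \geq 13$ vertices, $trc(C_n) = n$. -/

import Mathlib

open SimpleGraph

/-- A total coloring (edge colors `cE`, vertex colors `cV`) makes `G`
total-rainbow connected if any two distinct vertices are joined by a path
whose edges and internal vertices receive pairwise distinct colors. -/
def IsTRCColoring {V : Type*} (G : SimpleGraph V) {k : ℕ}
    (cE : Sym2 V → Fin k) (cV : V → Fin k) : Prop :=
  ∀ u v : V, u ≠ v → ∃ p : G.Walk u v, p.IsPath ∧
    (p.edges.map cE ++ p.support.tail.dropLast.map cV).Nodup

/-- The total-rainbow connection number of `G`. -/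
noncomputable def trc {V : Type*} (G : SimpleGraph V) : ℕ :=
  sInf {k | ∃ (cE : Sym2 V → Fin k) (cV : V → Fin k), IsTRCColoring G cE cV}

namespace TRC7

open List
open Fin.CommRing Fin.NatCast

variable {n : ℕ} [NeZero n]

lemma val_one' (hn : 2 ≤ n) : (1 : Fin n).val = 1 := by
  rw [Fin.val_one']; exact Nat.mod_eq_of_lt (by omega)

lemma natCast_inj {a b : ℕ} (ha : a < n) (hb : b < n) (h : (a : Fin n) = b) : a = b := by
  have := congrArg Fin.val h
  rwa [Fin.val_cast_of_lt ha, Fin.val_cast_of_lt hb] at this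

lemma natCast_sub {a : ℕ} (ha : a ≤ n) : ((n - a : ℕ) : Fin n) = -(a : Fin n) := by
  have : ((n - a : ℕ) : Fin n) + (a : Fin n) = ((n - a + a : ℕ) : Fin n) := by push_cast; ring
  rw [Nat.sub_add_cancel ha] at this
  have h0 : ((n : ℕ) : Fin n) = 0 := Fin.natCast_self n
  rw [h0] at this
  linear_combination this

lemma adj_iff (hn : 3 ≤ n) {a b : Fin n} :
    (cycleGraph n).Adj a b ↔ b = a + 1 ∨ b = a - 1 := by
  rw [cycleGraph_adj']
  constructor
  · rintro (h | h)
    · right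
      have h1 : a - b = 1 := Fin.ext (by rw [h, val_one' (by omega)])
      linear_combination -h1
    · left
      have h1 : b - a = 1 := Fin.ext (by rw [h, val_one' (by omega)])
      linear_combination h1
  · rintro (h | h)
    · right
      have h1 : b - a = 1 := by rw [h]; ring
      rw [h1, val_one' (by omega)]
    · left
      have h1 : a - b = 1 := by rw [h]; ring
      rw [h1, val_one' (by omega)]

lemma adj_step (hn : 3 ≤ n) {σ : Fin n} (hσ : σ = 1 ∨ σ = -1) (a : Fin n) :
    (cycleGraph n).Adj a (a + σ) := by
  rw [adj_iff hn]
  rcases hσ with h | h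
  · left; rw [h]
  · right; rw [h]; ring

/-- the arc walk with constant step σ -/
def arcWalk (hn : 3 ≤ n) {σ : Fin n} (hσ : σ = 1 ∨ σ = -1) :
    (u : Fin n) → (ℓ : ℕ) → (cycleGraph n).Walk u (u + ℓ • σ)
  | u, 0 => Walk.nil.copy rfl (by simp)
  | u, (ℓ+1) => (Walk.cons (adj_step hn hσ u) (arcWalk hn hσ (u + σ) ℓ)).copy rfl
      (by rw [succ_nsmul']; ring)

@[simp] lemma arcWalk_length (hn : 3 ≤ n) {σ : Fin n} (hσ : σ = 1 ∨ σ = -1) (u : Fin n)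
    (ℓ : ℕ) : (arcWalk hn hσ u ℓ).length = ℓ := by
  induction ℓ generalizing u with
  | zero => simp [arcWalk]
  | succ ℓ ih => simp [arcWalk, ih]

lemma arcWalk_support (hn : 3 ≤ n) {σ : Fin n} (hσ : σ = 1 ∨ σ = -1) (u : Fin n) (ℓ : ℕ) :
    (arcWalk hn hσ u ℓ).support = (range (ℓ+1)).map (fun i : ℕ => u + i • σ) := by
  induction ℓ generalizing u with
  | zero =>
    rw [arcWalk, Walk.support_copy, Walk.support_nil]
    simp [List.range_succ]
  | succ ℓ ih =>
    rw [arcWalk, Walk.support_copy, Walk.support_cons, ih,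
      range_succ_eq_map (n := ℓ+1), map_cons, List.map_map]
    simp only [zero_smul, add_zero]
    congr 1
    apply map_congr_left
    intro i _
    simp only [Function.comp_apply, Nat.succ_eq_add_one]
    rw [succ_nsmul']
    ring

lemma arcWalk_edges (hn : 3 ≤ n) {σ : Fin n} (hσ : σ = 1 ∨ σ = -1) (u : Fin n) (ℓ : ℕ) :
    (arcWalk hn hσ u ℓ).edges = (range ℓ).map (fun i : ℕ => s(u + i • σ, u + i • σ + σ)) := by
  induction ℓ generalizing u with
  | zero => rw [arcWalk, Walk.edges_copy, Walk.edges_nil]; simp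
  | succ ℓ ih =>
    rw [arcWalk, Walk.edges_copy, Walk.edges_cons, ih,
      range_succ_eq_map (n := ℓ), map_cons, List.map_map]
    simp only [zero_smul, add_zero]
    congr 1
    apply map_congr_left
    intro i _
    simp only [Function.comp_apply, Nat.succ_eq_add_one]
    rw [succ_nsmul']
    congr 1 <;> ring
lemma natCast_inj' {a b : ℕ} (ha : a < n) (hb : b < n) (h : (a : Fin n) = b) : a = b := by
  have := congrArg Fin.val h
  rwa [Fin.val_cast_of_lt ha, Fin.val_cast_of_lt hb] at this

lemma one_ne_negOne (hn : 3 ≤ n) : (1 : Fin n) ≠ -1 := by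
  intro h
  have h2 : (2 : Fin n) = 0 := by linear_combination h
  have : ((2 : ℕ) : Fin n) = ((0 : ℕ) : Fin n) := by push_cast; linear_combination h2
  have := natCast_inj' (by omega) (by omega) this
  omega

lemma tail_dropLast_map_range {α : Type*} (f : ℕ → α) (L : ℕ) :
    ((range (L+1)).map f).tail.dropLast = (range (L-1)).map (fun i => f (i+1)) := by
  match L with
  | 0 => simp [List.range_succ]
  | (m+1) =>
    rw [range_succ_eq_map, map_cons, List.tail_cons, List.map_map, range_succ, map_append]
    simp only [map_cons, map_nil, dropLast_concat, Nat.add_sub_cancel]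
    rfl


lemma classify (hn : 3 ≤ n) {u v : Fin n} (p : (cycleGraph n).Walk u v) (hp : p.IsPath) :
    ∃ σ : Fin n, (σ = 1 ∨ σ = -1) ∧ v = u + p.length • σ ∧
      p.support = (range (p.length+1)).map (fun i : ℕ => u + i • σ) ∧
      p.edges = (range p.length).map (fun i : ℕ => s(u + i • σ, u + i • σ + σ)) := by
  induction p with
  | nil =>
    exact ⟨1, Or.inl rfl, by simp, by simp [List.range_succ], by simp⟩
  | @cons u w v h q ih =>
    rw [Walk.cons_isPath_iff] at hp
    obtain ⟨σ, hσ, hv, hsup, hedg⟩ := ih hp.1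
    have hw : ∃ τ : Fin n, (τ = 1 ∨ τ = -1) ∧ w = u + τ := by
      rcases (adj_iff hn).mp h with h1 | h1
      · exact ⟨1, Or.inl rfl, h1⟩
      · exact ⟨-1, Or.inr rfl, by rw [h1]; ring⟩
    obtain ⟨τ, hτ, hwτ⟩ := hw
    -- find a common step δ that works for q (and extend)
    have key : ∃ δ : Fin n, (δ = 1 ∨ δ = -1) ∧ w = u + δ ∧ v = w + q.length • δ ∧
        q.support = (range (q.length+1)).map (fun i : ℕ => w + i • δ) ∧
        q.edges = (range q.length).map (fun i : ℕ => s(w + i • δ, w + i • δ + δ)) := by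
      by_cases hq0 : q.length = 0
      · refine ⟨τ, hτ, hwτ, ?_, ?_, ?_⟩
        · rw [hq0] at hv ⊢
          simpa using hv
        · rw [hsup, hq0]
          simp [List.range_succ]
        · rw [hedg, hq0]
          simp
      · refine ⟨σ, hσ, ?_, hv, hsup, hedg⟩
        rw [hwτ]
        by_contra hne
        have hστ : σ = -τ := by
          rcases hσ with h1 | h1 <;> rcases hτ with h2 | h2 <;> rw [h1, h2] at hne ⊢ <;>
            first | exact absurd rfl hne | rw [neg_neg] | rfl
        have hu_mem : u ∈ q.support := by
          rw [hsup]
          refine List.mem_map.mpr ⟨1, ?_, ?_⟩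
          · exact List.mem_range.mpr (by omega)
          · rw [hwτ, hστ, one_smul]; ring
        exact hp.2 hu_mem
    obtain ⟨δ, hδ, hwδ, hvδ, hsupδ, hedgδ⟩ := key
    refine ⟨δ, hδ, ?_, ?_, ?_⟩
    · simp only [Walk.length_cons]
      rw [succ_nsmul']
      linear_combination hvδ + hwδ
    · simp only [Walk.support_cons, Walk.length_cons]
      rw [hsupδ,
        range_succ_eq_map (n := q.length+1), map_cons, List.map_map]
      simp only [zero_smul, add_zero]
      congr 1
      apply map_congr_left
      intro i _
      simp only [Function.comp_apply, Nat.succ_eq_add_one]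
      rw [succ_nsmul', hwδ]
      ring
    · simp only [Walk.edges_cons, Walk.length_cons]
      rw [hedgδ,
        range_succ_eq_map (n := q.length), map_cons, List.map_map]
      simp only [zero_smul, add_zero]
      congr 1
      · rw [hwδ]
      · apply map_congr_left
        intro i _
        simp only [Function.comp_apply, Nat.succ_eq_add_one]
        rw [succ_nsmul', hwδ]
        congr 1 <;> ring


lemma smul_one' (i : ℕ) : i • (1 : Fin n) = (i : Fin n) := by
  rw [nsmul_eq_mul, mul_one]

lemma smul_negOne (i : ℕ) : i • (-1 : Fin n) = -(i : Fin n) := by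
  rw [nsmul_eq_mul]; ring

lemma length_le (hn : 3 ≤ n) {u v : Fin n} (p : (cycleGraph n).Walk u v) (hp : p.IsPath)
    {σ : Fin n} (hsup : p.support = (range (p.length+1)).map (fun i : ℕ => u + i • σ)) :
    p.length ≤ n - 1 := by
  by_contra hL
  have hnd : p.support.Nodup := hp.support_nodup
  rw [hsup] at hnd
  have h0 : (0 : ℕ) ∈ range (p.length + 1) := List.mem_range.mpr (by omega)
  have hn' : (n : ℕ) ∈ range (p.length + 1) := List.mem_range.mpr (by omega)
  have heq : u + (0:ℕ) • σ = u + (n:ℕ) • σ := by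
    rw [nsmul_eq_mul, nsmul_eq_mul, Fin.natCast_self]
    push_cast
    ring
  have := List.inj_on_of_nodup_map hnd h0 hn' heq
  omega

/-- the short arc from `u` to `u + (n-1)/2` is forced to be totally rainbow -/
lemma forced (hn : 13 ≤ n) {k : ℕ} (hk : k < n) (cE : Sym2 (Fin n) → Fin k)
    (cV : Fin n → Fin k) (H : IsTRCColoring (cycleGraph n) cE cV) (u : Fin n) :
    ((range ((n-1)/2)).map (fun i : ℕ => cE s(u + (i:Fin n), u + (i:Fin n) + 1)) ++
      (range ((n-1)/2 - 1)).map (fun i : ℕ => cV (u + ((i+1 : ℕ) : Fin n)))).Nodup := by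
  set t : ℕ := (n-1)/2 with htdef
  have ht1 : 6 ≤ t := by omega
  have ht2 : t < n := by omega
  have hne : u ≠ u + (t : Fin n) := by
    intro h
    have : ((t : ℕ) : Fin n) = ((0 : ℕ) : Fin n) := by
      push_cast
      linear_combination -h
    have := natCast_inj ht2 (by omega) this
    omega
  obtain ⟨p, hp, hnd⟩ := H u (u + (t : Fin n)) hne
  obtain ⟨σ, hσ, hv, hsup, hedg⟩ := classify (by omega) p hp
  have hlen : p.length ≤ n - 1 := length_le (by omega) p hp hsup
  rcases hσ with hσ | hσ
  · -- plus direction, length = t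
    subst hσ
    have hcast : ((p.length : ℕ) : Fin n) = ((t : ℕ) : Fin n) := by
      rw [smul_one'] at hv
      linear_combination -hv
    have hL : p.length = t := natCast_inj (by omega) ht2 hcast
    rw [hedg, hsup, tail_dropLast_map_range, List.map_map, List.map_map, hL] at hnd
    have e1 : (range t).map (cE ∘ fun i : ℕ => s(u + i • (1:Fin n), u + i • (1:Fin n) + 1)) =
        (range t).map (fun i : ℕ => cE s(u + (i:Fin n), u + (i:Fin n) + 1)) :=
      map_congr_left (fun i _ => by simp [Function.comp, smul_one'])
    have e2 : (range (t-1)).map (cV ∘ fun i : ℕ => u + ((i+1) : ℕ) • (1:Fin n)) =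
        (range (t-1)).map (fun i : ℕ => cV (u + ((i+1 : ℕ) : Fin n))) :=
      map_congr_left (fun i _ => by simp [Function.comp, smul_one'])
    rw [e1, e2] at hnd
    exact hnd
  · -- minus direction: too long, contradiction with nodup in Fin k
    exfalso
    subst hσ
    have hcast : ((p.length : ℕ) : Fin n) = ((n - t : ℕ) : Fin n) := by
      rw [smul_negOne] at hv
      rw [natCast_sub (by omega : t ≤ n)]
      linear_combination hv
    have hL : p.length = n - t := natCast_inj (by omega) (by omega) hcast
    have hlen2 : (p.edges.map cE ++ p.support.tail.dropLast.map cV).length = 2*(n-t) - 1 := by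
      rw [List.length_append, List.length_map, List.length_map, Walk.length_edges,
        List.length_dropLast, List.length_tail, Walk.length_support, hL]
      omega
    have hle := hnd.length_le_card
    rw [hlen2, Fintype.card_fin] at hle
    omega


/-- the interleaved position coloring -/
def gfun {k : ℕ} (n : ℕ) [NeZero n] (cE : Sym2 (Fin n) → Fin k) (cV : Fin n → Fin k) :
    ℕ → Fin k := fun j =>
  if j % 2 = 0 then cE s(((j/2 : ℕ) : Fin n), ((j/2 : ℕ) : Fin n) + 1)
  else cV (((j/2 : ℕ) : Fin n) + 1)

lemma gfun_even {k : ℕ} (cE : Sym2 (Fin n) → Fin k) (cV : Fin n → Fin k) (a i : ℕ) :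
    gfun n cE cV (2*a + 2*i) =
      cE s(((a:ℕ) : Fin n) + (i : Fin n), ((a:ℕ) : Fin n) + (i : Fin n) + 1) := by
  have h1 : (2*a + 2*i) % 2 = 0 := by omega
  have h2 : (2*a + 2*i) / 2 = a + i := by omega
  rw [gfun, if_pos h1, h2]
  norm_num

lemma gfun_odd {k : ℕ} (cE : Sym2 (Fin n) → Fin k) (cV : Fin n → Fin k) (a i : ℕ) :
    gfun n cE cV (2*a + (2*i + 1)) = cV (((a:ℕ) : Fin n) + ((i+1 : ℕ) : Fin n)) := by
  have h1 : ¬((2*a + (2*i+1)) % 2 = 0) := by omega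
  have h2 : (2*a + (2*i+1)) / 2 = a + i := by omega
  rw [gfun, if_neg h1, h2]
  congr 1
  push_cast
  ring

lemma gfun_period {k : ℕ} (cE : Sym2 (Fin n) → Fin k) (cV : Fin n → Fin k) (j : ℕ) :
    gfun n cE cV (j + 2*n) = gfun n cE cV j := by
  have h1 : (j + 2*n) % 2 = j % 2 := by omega
  have h2 : (j + 2*n) / 2 = j/2 + n := by omega
  have h3 : ((j/2 + n : ℕ) : Fin n) = ((j/2 : ℕ) : Fin n) := by
    push_cast [Fin.natCast_self]
    ring
  rw [gfun, gfun, h1, h2, h3]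

lemma key_window (hn : 13 ≤ n) {k : ℕ} (hk : k < n) (cE : Sym2 (Fin n) → Fin k)
    (cV : Fin n → Fin k) (H : IsTRCColoring (cycleGraph n) cE cV) (a j1 j2 : ℕ)
    (hj : j1 < j2) (hj2 : j2 ≤ 2*((n-1)/2) - 2) :
    gfun n cE cV (2*a + j1) ≠ gfun n cE cV (2*a + j2) := by
  set t : ℕ := (n-1)/2 with htdef
  have ht1 : 6 ≤ t := by omega
  set u : Fin n := ((a : ℕ) : Fin n) with hudef
  have W := forced hn hk cE cV H u
  rw [List.nodup_append'] at W
  obtain ⟨WA, WB, WD⟩ := W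
  obtain ⟨i1, hi1⟩ : ∃ i, j1 = 2*i ∨ j1 = 2*i + 1 := ⟨j1/2, by omega⟩
  obtain ⟨i2, hi2⟩ : ∃ i, j2 = 2*i ∨ j2 = 2*i + 1 := ⟨j2/2, by omega⟩
  intro heq
  rcases hi1 with hi1 | hi1 <;> rcases hi2 with hi2 | hi2 <;> subst hi1 <;> subst hi2
  · -- even, even : use WA
    rw [gfun_even, gfun_even] at heq
    have := List.inj_on_of_nodup_map WA (List.mem_range.mpr (by omega : i1 < t))
      (List.mem_range.mpr (by omega : i2 < t)) heq
    omega
  · -- even, odd : use disjointness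
    rw [gfun_even, gfun_odd] at heq
    refine WD (List.mem_map.mpr ⟨i1, List.mem_range.mpr (by omega : i1 < t), rfl⟩) ?_
    rw [heq]
    exact List.mem_map.mpr ⟨i2, List.mem_range.mpr (by omega : i2 < t - 1), rfl⟩
  · -- odd, even
    rw [gfun_odd, gfun_even] at heq
    refine WD (List.mem_map.mpr ⟨i2, List.mem_range.mpr (by omega : i2 < t), rfl⟩) ?_
    rw [← heq]
    exact List.mem_map.mpr ⟨i1, List.mem_range.mpr (by omega : i1 < t - 1), rfl⟩
  · -- odd, odd : use WB
    rw [gfun_odd, gfun_odd] at heq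
    have := List.inj_on_of_nodup_map WB (List.mem_range.mpr (by omega : i1 < t - 1))
      (List.mem_range.mpr (by omega : i2 < t - 1)) heq
    omega

lemma three_order {a b c : ℕ} (hab : a ≠ b) (hac : a ≠ c) (hbc : b ≠ c) (P : ℕ → Prop)
    (pa : P a) (pb : P b) (pc : P c) :
    ∃ x y z : ℕ, x < y ∧ y < z ∧ P x ∧ P y ∧ P z := by
  rcases hab.lt_or_gt with h1 | h1 <;> rcases hac.lt_or_gt with h2 | h2 <;>
    rcases hbc.lt_or_gt with h3 | h3
  · exact ⟨a, b, c, h1, h3, pa, pb, pc⟩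
  · exact ⟨a, c, b, h2, h3, pa, pc, pb⟩
  · omega
  · exact ⟨c, a, b, h2, h1, pc, pa, pb⟩
  · exact ⟨b, a, c, h1, h2, pb, pa, pc⟩
  · omega
  · exact ⟨b, c, a, h3, h2, pb, pc, pa⟩
  · exact ⟨c, b, a, h3, h1, pc, pb, pa⟩

lemma not_small (hn : 13 ≤ n) {k : ℕ} (hk : k < n) (cE : Sym2 (Fin n) → Fin k)
    (cV : Fin n → Fin k) (H : IsTRCColoring (cycleGraph n) cE cV) : False := by
  classical
  set t : ℕ := (n-1)/2 with htdef
  set g : ℕ → Fin k := gfun n cE cV with hgdef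
  have pair : ∀ q d : ℕ, 1 ≤ d → d ≤ 2*t - 3 → g q ≠ g (q + d) := by
    intro q d h1 h2
    obtain ⟨a, ha⟩ : ∃ a, q = 2*a ∨ q = 2*a + 1 := ⟨q/2, by omega⟩
    rcases ha with ha | ha
    · have := key_window hn hk cE cV H a 0 d (by omega) (by omega)
      rw [Nat.add_zero] at this
      rw [ha]
      exact this
    · have := key_window hn hk cE cV H a 1 (1+d) (by omega) (by omega)
      rw [ha]
      have e : 2*a + (1 + d) = 2*a + 1 + d := by omega
      rw [e] at this
      exact this
  have hcard : (Finset.univ : Finset (Fin k)).card * 2 < (Finset.range (2*n)).card := by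
    rw [Finset.card_range, Finset.card_univ, Fintype.card_fin]
    omega
  obtain ⟨y, -, hy⟩ := Finset.exists_lt_card_fiber_of_mul_lt_card_of_maps_to
    (fun a _ => Finset.mem_univ (g a)) hcard
  obtain ⟨p1, hp1, p2, hp2, p3, hp3, h12, h13, h23⟩ := Finset.two_lt_card.mp hy
  simp only [Finset.mem_filter, Finset.mem_range] at hp1 hp2 hp3
  obtain ⟨x, y', z, hxy, hyz, hx, hy', hz⟩ := three_order h12 h13 h23
    (fun m => m < 2*n ∧ g m = y) hp1 hp2 hp3
  have hsplit : (y' - x ≤ 2*t - 3) ∨ (z - y' ≤ 2*t - 3) ∨ (2*n - z + x ≤ 2*t - 3) := by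
    omega
  rcases hsplit with hd | hd | hd
  · apply pair x (y' - x) (by omega) hd
    rw [show x + (y' - x) = y' by omega, hx.2, hy'.2]
  · apply pair y' (z - y') (by omega) hd
    rw [show y' + (z - y') = z by omega, hy'.2, hz.2]
  · apply pair z (2*n - z + x) (by omega) hd
    rw [show z + (2*n - z + x) = x + 2*n by omega, hgdef, gfun_period]
    rw [← hgdef, hz.2, hx.2]


lemma two_ne_zero' (hn : 3 ≤ n) : (2 : Fin n) ≠ 0 := by
  intro h
  have h2 : ((2 : ℕ) : Fin n) = ((0 : ℕ) : Fin n) := by push_cast; linear_combination h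
  have := natCast_inj (by omega) (by omega) h2
  omega

/-- edge coloring of the cycle: the edge `s(a, a+1)` gets color `a` -/
def colE (hn : 3 ≤ n) : Sym2 (Fin n) → Fin n :=
  Sym2.lift ⟨fun a b => if b = a + 1 then a else if a = b + 1 then b else 0, by
    intro a b
    by_cases h1 : b = a + 1 <;> by_cases h2 : a = b + 1
    · exfalso
      apply two_ne_zero' hn
      have h3 : a = a + 2 := by rw [h2] at h1 ⊢; linear_combination h1
      linear_combination -h3
    · subst h1; simp [h2]
    · subst h2; simp [h1]
    · simp [h1, h2]⟩

/-- vertex coloring of the cycle: vertex `v` gets color `v + n/2` -/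
def colV (n : ℕ) [NeZero n] : Fin n → Fin n := fun v => v + ((n/2 : ℕ) : Fin n)

lemma colE_right (hn : 3 ≤ n) (a : Fin n) : colE hn s(a, a + 1) = a := by
  rw [colE, Sym2.lift_mk]
  simp

lemma colE_left (hn : 3 ≤ n) (a : Fin n) : colE hn s(a, a - 1) = a - 1 := by
  rw [colE, Sym2.lift_mk]
  have h1 : ¬(a - 1 = a + 1) := by
    intro h
    apply two_ne_zero' hn
    linear_combination -h
  have h2 : a = a - 1 + 1 := by ring
  simp [h1, ← h2]

lemma nodup_offsets (u : Fin n) (L : List ℕ) (hL : L.Nodup) (hb : ∀ x ∈ L, x < n) :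
    (L.map (fun x : ℕ => u + (x : Fin n))).Nodup := by
  refine hL.map_on ?_
  intro x hx y hy h
  exact natCast_inj (hb x hx) (hb y hy) (by linear_combination h)

lemma good_arc (hn : 13 ≤ n) {σ : Fin n} (hσ : σ = 1 ∨ σ = -1) (u : Fin n) (ℓ : ℕ)
    (h1 : 1 ≤ ℓ) (h2 : ℓ ≤ n/2) :
    (arcWalk (by omega) hσ u ℓ).IsPath ∧
      ((arcWalk (by omega) hσ u ℓ).edges.map (colE (by omega)) ++
        (arcWalk (by omega) hσ u ℓ).support.tail.dropLast.map (colV n)).Nodup := by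
  have hn3 : 3 ≤ n := by omega
  constructor
  · rw [Walk.isPath_def, arcWalk_support]
    refine List.Nodup.map_on ?_ (List.nodup_range)
    intro x hx y hy h
    rw [List.mem_range] at hx hy
    rcases hσ with hσ | hσ <;> subst hσ
    · rw [smul_one', smul_one'] at h
      refine natCast_inj ?_ ?_ (by linear_combination h) <;> omega
    · rw [smul_negOne, smul_negOne] at h
      refine natCast_inj ?_ ?_ (by linear_combination -h) <;> omega
  · rw [arcWalk_edges, arcWalk_support, tail_dropLast_map_range, List.map_map, List.map_map]
    rcases hσ with hσ | hσ <;> subst hσ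
    · -- step +1
      have e1 : (range ℓ).map ((colE hn3) ∘ fun i : ℕ => s(u + i • (1:Fin n), u + i • (1:Fin n) + 1)) =
          (range ℓ).map (fun x : ℕ => u + (x : Fin n)) := by
        apply map_congr_left
        intro i _
        simp only [Function.comp_apply, smul_one']
        exact colE_right hn3 _
      have e2 : (range (ℓ-1)).map ((colV n) ∘ fun i : ℕ => u + ((i+1) : ℕ) • (1:Fin n)) =
          ((range (ℓ-1)).map (fun i : ℕ => n/2 + 1 + i)).map (fun x : ℕ => u + (x : Fin n)) := by
        rw [List.map_map]
        apply map_congr_left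
        intro i _
        simp only [Function.comp_apply, smul_one', colV]
        push_cast
        ring
      rw [e1, e2, ← List.map_append]
      apply nodup_offsets
      · rw [List.nodup_append']
        refine ⟨List.nodup_range, List.Nodup.map_on ?_ (List.nodup_range), ?_⟩
        · intro x _ y _ h
          omega
        · intro x hx hmem
          rw [List.mem_range] at hx
          obtain ⟨i, hi, hix⟩ := List.mem_map.mp hmem
          omega
      · intro x hx
        rw [List.mem_append, List.mem_range] at hx
        rcases hx with hx | hx
        · omega
        · obtain ⟨i, hi, hix⟩ := List.mem_map.mp hx
          rw [List.mem_range] at hi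
          omega
    · -- step -1
      have e1 : (range ℓ).map ((colE hn3) ∘ fun i : ℕ => s(u + i • (-1:Fin n), u + i • (-1:Fin n) + -1)) =
          ((range ℓ).map (fun i : ℕ => n - (i+1))).map (fun x : ℕ => u + (x : Fin n)) := by
        rw [List.map_map]
        apply map_congr_left
        intro i hi
        rw [List.mem_range] at hi
        simp only [Function.comp_apply, smul_negOne]
        have ha : u + -(i : Fin n) + -1 = (u + -(i:Fin n)) - 1 := by ring
        rw [ha, colE_left hn3]
        rw [natCast_sub (by omega : i + 1 ≤ n)]
        push_cast
        ring
      have e2 : (range (ℓ-1)).map ((colV n) ∘ fun i : ℕ => u + ((i+1) : ℕ) • (-1:Fin n)) =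
          ((range (ℓ-1)).map (fun i : ℕ => n/2 - (i+1))).map (fun x : ℕ => u + (x : Fin n)) := by
        rw [List.map_map]
        apply map_congr_left
        intro i hi
        rw [List.mem_range] at hi
        simp only [Function.comp_apply, smul_negOne, colV]
        rw [Nat.cast_sub (by omega : i + 1 ≤ n/2)]
        push_cast
        ring
      rw [e1, e2, ← List.map_append]
      apply nodup_offsets
      · rw [List.nodup_append']
        refine ⟨List.Nodup.map_on ?_ (List.nodup_range), List.Nodup.map_on ?_ (List.nodup_range), ?_⟩
        · intro x hx y hy h
          rw [List.mem_range] at hx hy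
          omega
        · intro x hx y hy h
          rw [List.mem_range] at hx hy
          omega
        · intro x hx hmem
          obtain ⟨i, hi, hix⟩ := List.mem_map.mp hx
          obtain ⟨j, hj, hjx⟩ := List.mem_map.mp hmem
          rw [List.mem_range] at hi hj
          omega
      · intro x hx
        rw [List.mem_append] at hx
        rcases hx with hx | hx <;> obtain ⟨i, hi, hix⟩ := List.mem_map.mp hx <;>
          rw [List.mem_range] at hi <;> omega

lemma exists_coloring (hn : 13 ≤ n) :
    ∃ (cE : Sym2 (Fin n) → Fin n) (cV : Fin n → Fin n),
      IsTRCColoring (cycleGraph n) cE cV := by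
  refine ⟨colE (by omega), colV n, ?_⟩
  intro u v huv
  set d : ℕ := (v - u).val with hddef
  have hd0 : d ≠ 0 := by
    intro h
    apply huv
    have h1 : ((d : ℕ) : Fin n) = v - u := Fin.cast_val_eq_self _
    rw [h, Nat.cast_zero] at h1
    linear_combination h1
  have hdn : d < n := (v - u).isLt
  by_cases hc : d ≤ n/2
  · -- use the +1 arc of length d
    have hend : u + d • (1 : Fin n) = v := by
      rw [smul_one', hddef, Fin.cast_val_eq_self]
      ring
    obtain ⟨hpath, hcolors⟩ := good_arc hn (Or.inl rfl) u d (by omega) hc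
    exact ⟨(arcWalk (by omega) (Or.inl rfl) u d).copy rfl hend,
      (Walk.isPath_copy _ _ _).mpr hpath,
      by rwa [Walk.edges_copy, Walk.support_copy]⟩
  · -- use the -1 arc of length n - d
    have hend : u + (n - d) • (-1 : Fin n) = v := by
      rw [smul_negOne, natCast_sub (by omega : d ≤ n), hddef, Fin.cast_val_eq_self]
      ring
    obtain ⟨hpath, hcolors⟩ := good_arc hn (Or.inr rfl) u (n - d) (by omega) (by omega)
    exact ⟨(arcWalk (by omega) (Or.inr rfl) u (n - d)).copy rfl hend,
      (Walk.isPath_copy _ _ _).mpr hpath,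
      by rwa [Walk.edges_copy, Walk.support_copy]⟩

end TRC7

theorem stmt_7 (n : ℕ) (hn : 13 ≤ n) :
    trc (SimpleGraph.cycleGraph n) = n := by
  haveI : NeZero n := ⟨by omega⟩
  have hmem : n ∈ {k | ∃ (cE : Sym2 (Fin n) → Fin k) (cV : Fin n → Fin k),
      IsTRCColoring (cycleGraph n) cE cV} := TRC7.exists_coloring hn
  have hinf := Nat.sInf_mem (⟨n, hmem⟩ : Set.Nonempty _)
  have hle : trc (SimpleGraph.cycleGraph n) ≤ n := Nat.sInf_le hmem
  rcases eq_or_lt_of_le hle with h | h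
  · exact h
  · exfalso
    obtain ⟨cE, cV, H⟩ := hinf
    exact TRC7.not_small hn h cE cV H
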